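/- arXiv:1608.08871 — 4 statements merged into one kernel-verified Lean document; each statement's English description precedes it below -/
import Mathlib

section
/- Let d ≥ 1, Ω ⊆ E = EuclideanSpace ℝ (Fin d), h > 0, J a finite index set, nodes x_j ∈ E, and φ_j : E → ℝ with 0 ≤ φ_j(x) ≤ 1, Σ_{j∈J} φ_j(x) = 1 for every x ∈ Ω, and φ_j(x) = 0 whenever ‖x − x_j‖ > h. For each j ∈ J let a_j ∈ ℝ with |a_j| ≤ M₀, β_j ∈ ℝ, η_j ∈ ℝ with 0 < η_j ≤ η_max, and unit vectors d_j, d_j^h ∈ E with ‖d_j − d_j^h‖ ≤ ε. Define v(x) := Σ_{j∈J} a_j φ_j(x)·exp(i(β_j + ω η_j ⟨d_j, x − x_j⟩)) and v^h(x) := Σ_{j∈J} a_j φ_j(x)·exp(i(β_j + ω η_j ⟨d_j^h, x − x_j⟩)). Then for every ω > 0 and every x ∈ Ω, |v(x) − v^h(x)| ≤ ω h η_max ε M₀. -/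
open Complex
open scoped InnerProductSpace BigOperators

lemma aux_exp_I_sub_one (u : ℝ) : ‖Complex.exp (Complex.I * u) - 1‖ ≤ |u| := by
  have h1 : Complex.exp (Complex.I * u) = Real.cos u + Real.sin u * Complex.I := by
    rw [mul_comm, Complex.exp_mul_I]
    push_cast [Complex.ofReal_cos, Complex.ofReal_sin]
    ring
  have h2 : ‖Complex.exp (Complex.I * u) - 1‖
      = Real.sqrt ((Real.cos u - 1)^2 + (Real.sin u)^2) := by
    rw [h1]
    rw [Complex.norm_def, Complex.normSq_apply]
    simp [Complex.add_re, Complex.add_im, Complex.cos_ofReal_re, Complex.sin_ofReal_re]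
    ring_nf
  rw [h2]
  have h3 : (Real.cos u - 1)^2 + (Real.sin u)^2 = 2 - 2 * Real.cos u := by
    have := Real.sin_sq_add_cos_sq u
    nlinarith
  rw [h3]
  have h4 : 2 - 2 * Real.cos u ≤ u^2 := by
    have := Real.one_sub_sq_div_two_le_cos (x := u)
    nlinarith
  calc Real.sqrt (2 - 2 * Real.cos u) ≤ Real.sqrt (u^2) := Real.sqrt_le_sqrt h4
    _ = |u| := Real.sqrt_sq_eq_abs u

lemma aux_exp_I_sub (s t : ℝ) :
    ‖Complex.exp (Complex.I * s) - Complex.exp (Complex.I * t)‖ ≤ |s - t| := by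
  have : Complex.exp (Complex.I * s) - Complex.exp (Complex.I * t)
      = Complex.exp (Complex.I * t) * (Complex.exp (Complex.I * (s - t)) - 1) := by
    rw [mul_sub, ← Complex.exp_add, mul_one]
    push_cast
    ring_nf
  rw [this, norm_mul]
  have habs : ‖Complex.exp (Complex.I * t)‖ = 1 := by
    rw [mul_comm]
    exact Complex.norm_exp_ofReal_mul_I t
  rw [habs, one_mul]
  have := aux_exp_I_sub_one (s - t)
  rwa [Complex.ofReal_sub] at this

/-- Sensitivity of the ray-FEM interpolant to perturbations of the ray directions: if
`v` and `vʰ` are built from unit ray directions `dⱼ` and `dⱼʰ` with `‖dⱼ − dⱼʰ‖ ≤ ε`,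
local slownesses `0 < ηⱼ ≤ η_max`, nodal phases `βⱼ`, and coefficients `|aⱼ| ≤ M₀`, over a
nonnegative partition of unity subordinate to balls of radius `h`, then
`|v(x) − vʰ(x)| ≤ ωhη_max ε M₀` on `Ω`. -/
theorem stmt_7 {d : ℕ} (hd : 1 ≤ d) {ι : Type*} (J : Finset ι)
    (Ω : Set (EuclideanSpace ℝ (Fin d))) (h : ℝ) (hh : 0 < h)
    (xj : ι → EuclideanSpace ℝ (Fin d))
    (φj : ι → EuclideanSpace ℝ (Fin d) → ℝ)
    (hφj : ∀ j ∈ J, ∀ x, 0 ≤ φj j x ∧ φj j x ≤ 1)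
    (hsum : ∀ x ∈ Ω, ∑ j ∈ J, φj j x = 1)
    (hsupp : ∀ j ∈ J, ∀ x, h < ‖x - xj j‖ → φj j x = 0)
    (a : ι → ℝ) (M₀ : ℝ) (hM₀ : 0 ≤ M₀) (ha : ∀ j ∈ J, |a j| ≤ M₀)
    (β η : ι → ℝ) (ηmax : ℝ) (hηmax0 : 0 ≤ ηmax)
    (hη : ∀ j ∈ J, 0 < η j ∧ η j ≤ ηmax)
    (dj djh : ι → EuclideanSpace ℝ (Fin d))
    (hdj : ∀ j ∈ J, ‖dj j‖ = 1) (hdjh : ∀ j ∈ J, ‖djh j‖ = 1)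
    (ε : ℝ) (hε0 : 0 ≤ ε) (hε : ∀ j ∈ J, ‖dj j - djh j‖ ≤ ε) :
    ∀ ω : ℝ, 0 < ω → ∀ x ∈ Ω,
      ‖((∑ j ∈ J, (a j : ℂ) * (φj j x : ℂ) *
            Complex.exp (Complex.I * ((β j + ω * η j * ⟪dj j, x - xj j⟫_ℝ : ℝ) : ℂ)))
         - ∑ j ∈ J, (a j : ℂ) * (φj j x : ℂ) *
            Complex.exp (Complex.I * ((β j + ω * η j * ⟪djh j, x - xj j⟫_ℝ : ℝ) : ℂ)))‖
      ≤ ω * h * ηmax * ε * M₀ := by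
  intro ω hω x hx
  rw [← Finset.sum_sub_distrib]
  calc ‖∑ j ∈ J, ((a j : ℂ) * (φj j x : ℂ) *
            Complex.exp (Complex.I * ((β j + ω * η j * ⟪dj j, x - xj j⟫_ℝ : ℝ) : ℂ))
          - (a j : ℂ) * (φj j x : ℂ) *
            Complex.exp (Complex.I * ((β j + ω * η j * ⟪djh j, x - xj j⟫_ℝ : ℝ) : ℂ)))‖
      ≤ ∑ j ∈ J, ‖(a j : ℂ) * (φj j x : ℂ) *
            Complex.exp (Complex.I * ((β j + ω * η j * ⟪dj j, x - xj j⟫_ℝ : ℝ) : ℂ))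
          - (a j : ℂ) * (φj j x : ℂ) *
            Complex.exp (Complex.I * ((β j + ω * η j * ⟪djh j, x - xj j⟫_ℝ : ℝ) : ℂ))‖ := by
        exact norm_sum_le J fun j => ((a j : ℂ) * (φj j x : ℂ) *
            Complex.exp (Complex.I * ((β j + ω * η j * ⟪dj j, x - xj j⟫_ℝ : ℝ) : ℂ))
          - (a j : ℂ) * (φj j x : ℂ) *
            Complex.exp (Complex.I * ((β j + ω * η j * ⟪djh j, x - xj j⟫_ℝ : ℝ) : ℂ)))
    _ ≤ ∑ j ∈ J, (ω * h * ηmax * ε * M₀) * φj j x := by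
        apply Finset.sum_le_sum
        intro j hj
        have hφ0 := (hφj j hj x).1
        rw [← mul_sub, norm_mul, norm_mul, Complex.norm_real, Real.norm_eq_abs, Complex.norm_real, Real.norm_eq_abs,
          _root_.abs_of_nonneg hφ0]
        by_cases hsx : h < ‖x - xj j‖
        · rw [hsupp j hj x hsx]
          simp
        · push_neg at hsx
          have hterm : ‖
              (Complex.exp (Complex.I * ((β j + ω * η j * ⟪dj j, x - xj j⟫_ℝ : ℝ) : ℂ))
              - Complex.exp (Complex.I * ((β j + ω * η j * ⟪djh j, x - xj j⟫_ℝ : ℝ) : ℂ)))‖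
              ≤ ω * h * ηmax * ε := by
            refine le_trans (aux_exp_I_sub _ _) ?_
            have : (β j + ω * η j * ⟪dj j, x - xj j⟫_ℝ)
                - (β j + ω * η j * ⟪djh j, x - xj j⟫_ℝ)
                = ω * η j * ⟪dj j - djh j, x - xj j⟫_ℝ := by
              rw [inner_sub_left]; ring
            rw [this, abs_mul, abs_mul, abs_of_pos hω, abs_of_pos (hη j hj).1]
            have hinner : |⟪dj j - djh j, x - xj j⟫_ℝ| ≤ ε * h := by
              calc |⟪dj j - djh j, x - xj j⟫_ℝ| ≤ ‖dj j - djh j‖ * ‖x - xj j‖ :=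
                    abs_real_inner_le_norm _ _
                _ ≤ ε * h := mul_le_mul (hε j hj) hsx (norm_nonneg _) hε0
            calc ω * η j * |⟪dj j - djh j, x - xj j⟫_ℝ| ≤ ω * ηmax * (ε * h) := by
                  apply mul_le_mul
                  · exact mul_le_mul_of_nonneg_left (hη j hj).2 hω.le
                  · exact hinner
                  · exact abs_nonneg _
                  · positivity
              _ = ω * h * ηmax * ε := by ring
          rw [mul_assoc]
          calc |a j| * (φj j x * ‖_‖) ≤ M₀ * (φj j x * (ω * h * ηmax * ε)) := by
                apply mul_le_mul (ha j hj)
                · exact mul_le_mul_of_nonneg_left hterm hφ0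
                · positivity
                · exact hM₀
            _ = ω * h * ηmax * ε * M₀ * φj j x := by ring
    _ = ω * h * ηmax * ε * M₀ := by
        rw [← Finset.mul_sum, hsum x hx, mul_one]
end

section
/- Let d ≥ 1 and let Ω ⊆ E = EuclideanSpace ℝ (Fin d) be measurable with finite Lebesgue measure |Ω|. Let {φ_j}_{j∈J} be a nonnegative partition of unity on Ω subordinate to balls of radius h centered at nodes x_j (0 ≤ φ_j ≤ 1, Σ_j φ_j = 1 on Ω, φ_j(x) = 0 for ‖x − x_j‖ > h). Let A : E → ℝ with |A(x_j)| ≤ M₀, and φ : E → ℝ twice continuously differentiable with ‖∇²φ‖ ≤ M₂ everywhere, ∇φ(x_j) ≠ 0 and ‖∇φ(x_j)‖ ≤ η_max for all j. Define u(x) := A(x)e^{iωφ(x)}, d_j := ∇φ(x_j)/‖∇φ(x_j)‖, and, for estimated unit directions d_j^h with ‖d_j − d_j^h‖ ≤ C_d ω^{-1/2}, the numerical ray interpolant u_I^h(x) := Σ_j A(x_j)φ_j(x)·exp(iω(φ(x_j) + ‖∇φ(x_j)‖⟨d_j^h, x − x_j⟩)). Assume ‖A − Σ_j A(x_j)φ_j‖_{L²(Ω)}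 ≤ C_A h², ω ≥ 1 and h ≤ 1/ω. Then ‖u − u_I^h‖_{L²(Ω)} ≤ (C_A + M₂ M₀ |Ω|^{1/2}/2 + C_d η_max M₀ |Ω|^{1/2})·ω^{-1/2}. -/
open Complex MeasureTheory
open scoped InnerProductSpace BigOperators ENNReal

/-- Lipschitz bound for `t ↦ exp(it)` on the reals. -/
lemma stmt8_exp_I_lip (a b : ℝ) :
    ‖Complex.exp (Complex.I * a) - Complex.exp (Complex.I * b)‖ ≤ |a - b| := by
  have hder : ∀ t : ℝ, HasDerivAt (fun s : ℝ => Complex.exp (Complex.I * s))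
      (Complex.exp (Complex.I * t) * Complex.I) t := by
    intro t
    have h1 : HasDerivAt (fun s : ℝ => (s : ℂ)) 1 t := Complex.ofRealCLM.hasDerivAt
    have h2 : HasDerivAt (fun s : ℝ => Complex.I * (s : ℂ)) (Complex.I * 1) t := h1.const_mul _
    simpa using h2.cexp
  have := Convex.norm_image_sub_le_of_norm_hasDerivWithin_le
    (f := fun s : ℝ => Complex.exp (Complex.I * s))
    (f' := fun t : ℝ => Complex.exp (Complex.I * t) * Complex.I) (s := Set.univ) (C := 1)
    (fun t _ => (hder t).hasDerivWithinAt) (fun t _ => by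
      rw [norm_mul]
      have : Complex.I * (t:ℂ) = (t:ℂ) * Complex.I := by ring
      simp [this, Complex.norm_exp_ofReal_mul_I])
    convex_univ (Set.mem_univ b) (Set.mem_univ a)
  simpa [Real.norm_eq_abs] using this

/-- First-order Taylor remainder bound with the sharp constant `1/2`. -/
lemma stmt8_taylor_bd {E : Type*} [NormedAddCommGroup E] [NormedSpace ℝ E]
    (φ : E → ℝ) (hφ : ContDiff ℝ 2 φ) (M₂ : ℝ)
    (hM₂ : ∀ y, ‖fderiv ℝ (fun z => fderiv ℝ φ z) y‖ ≤ M₂) (a x : E) :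
    |φ x - φ a - fderiv ℝ φ a (x - a)| ≤ M₂ * ‖x - a‖ ^ 2 / 2 := by
  set v := x - a with hv
  have hM₂0 : 0 ≤ M₂ := le_trans (norm_nonneg (fderiv ℝ (fun z => fderiv ℝ φ z) a)) (hM₂ a)
  have hf1 : ContDiff ℝ 1 (fun z => fderiv ℝ φ z) := hφ.fderiv_right (by norm_num)
  have hφd : Differentiable ℝ φ := hφ.differentiable (by norm_num)
  have hlip : ∀ y z : E, ‖fderiv ℝ φ y - fderiv ℝ φ z‖ ≤ M₂ * ‖y - z‖ := by
    intro y z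
    exact Convex.norm_image_sub_le_of_norm_fderiv_le
      (fun w _ => (hf1.differentiable (by norm_num)).differentiableAt)
      (fun w _ => hM₂ w) convex_univ (Set.mem_univ z) (Set.mem_univ y)
  set g : ℝ → ℝ := fun t => φ (a + t • v) with hg
  set gd : ℝ → ℝ := fun t => fderiv ℝ φ (a + t • v) v with hgd
  have hline : ∀ t : ℝ, HasDerivAt (fun s : ℝ => a + s • v) v t := by
    intro t
    simpa using ((hasDerivAt_id t).smul_const v).const_add a
  have hgder : ∀ t : ℝ, HasDerivAt g (gd t) t := by
    intro t
    exact (hφd (a + t • v)).hasFDerivAt.comp_hasDerivAt t (hline t)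
  have hcont : Continuous gd := by
    have h1 : Continuous fun t : ℝ => fderiv ℝ φ (a + t • v) :=
      hf1.continuous.comp (by continuity)
    exact h1.clm_apply continuous_const
  have hFTC : ∫ t in (0:ℝ)..1, gd t = g 1 - g 0 :=
    intervalIntegral.integral_eq_sub_of_hasDerivAt (fun t _ => hgder t)
      (hcont.intervalIntegrable 0 1)
  have hg1 : g 1 = φ x := by simp [hg, hv]
  have hg0 : g 0 = φ a := by simp [hg]
  have hgd0 : gd 0 = fderiv ℝ φ a v := by simp [hgd]
  have hsub : φ x - φ a - fderiv ℝ φ a v = ∫ t in (0:ℝ)..1, (gd t - gd 0) := by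
    rw [intervalIntegral.integral_sub (hcont.intervalIntegrable 0 1)
      (intervalIntegrable_const), hFTC, intervalIntegral.integral_const]
    rw [hg1, hg0, hgd0, sub_zero, one_smul]
  have hbound : ∀ t ∈ Set.uIoc (0:ℝ) 1, ‖gd t - gd 0‖ ≤ (M₂ * ‖v‖ ^ 2) * t := by
    intro t ht
    rw [Set.uIoc_of_le (by norm_num : (0:ℝ) ≤ 1)] at ht
    have ht0 : 0 < t := ht.1
    have hd : gd t - gd 0 = (fderiv ℝ φ (a + t • v) - fderiv ℝ φ (a + (0:ℝ) • v)) v := by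
      simp [hgd]
    rw [hd]
    calc ‖(fderiv ℝ φ (a + t • v) - fderiv ℝ φ (a + (0:ℝ) • v)) v‖
        ≤ ‖fderiv ℝ φ (a + t • v) - fderiv ℝ φ (a + (0:ℝ) • v)‖ * ‖v‖ :=
          ContinuousLinearMap.le_opNorm _ _
      _ ≤ (M₂ * ‖a + t • v - (a + (0:ℝ) • v)‖) * ‖v‖ := by
          exact mul_le_mul_of_nonneg_right (hlip _ _) (norm_nonneg v)
      _ = (M₂ * ‖v‖ ^ 2) * t := by
          have : a + t • v - (a + (0:ℝ) • v) = t • v := by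
            simp
          rw [this, norm_smul, Real.norm_eq_abs, abs_of_pos ht0]; ring
  have hnorm := intervalIntegral.norm_integral_le_of_norm_le
    (f := fun t => gd t - gd 0) (g := fun t => (M₂ * ‖v‖ ^ 2) * t)
    (μ := volume) (a := 0) (b := 1)
    (by norm_num) (Filter.Eventually.of_forall fun t ht =>
      hbound t (by rwa [Set.uIoc_of_le (by norm_num : (0:ℝ) ≤ 1)]))
    ((continuous_const.mul continuous_id).intervalIntegrable 0 1)
  have hint : ∫ t in (0:ℝ)..1, (M₂ * ‖v‖ ^ 2) * t = M₂ * ‖v‖ ^ 2 / 2 := by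
    rw [intervalIntegral.integral_const_mul, integral_id]; ring
  rw [hsub]
  calc |∫ t in (0:ℝ)..1, (gd t - gd 0)| ≤ |∫ t in (0:ℝ)..1, (M₂ * ‖v‖ ^ 2) * t| := by
        simpa [Real.norm_eq_abs] using hnorm.trans (le_abs_self _)
    _ = |M₂ * ‖v‖ ^ 2 / 2| := by rw [hint]
    _ = M₂ * ‖v‖ ^ 2 / 2 := abs_of_nonneg (by positivity)

lemma stmt8_sq_half (y : ℝ≥0∞) : (y ^ (2:ℝ)) ^ ((1:ℝ)/2) = y := by
  rw [← ENNReal.rpow_mul]; norm_num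

lemma stmt8_half_sq (y : ℝ≥0∞) : (y ^ ((1:ℝ)/2)) ^ (2:ℝ) = y := by
  rw [← ENNReal.rpow_mul]; norm_num

/-- Minkowski inequality in `ℝ≥0∞` for a (possibly non-measurable) function plus a
constant, for the lower Lebesgue integral. -/
lemma stmt8_lint_sq_add_const {α : Type*} [MeasurableSpace α] (μ : Measure α)
    (u : α → ℝ≥0∞) (c : ℝ≥0∞) :
    (∫⁻ x, (u x + c) ^ (2:ℝ) ∂μ) ^ ((1:ℝ)/2)
      ≤ (∫⁻ x, u x ^ (2:ℝ) ∂μ) ^ ((1:ℝ)/2) + c * (μ Set.univ) ^ ((1:ℝ)/2) := by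
  set R := (∫⁻ x, u x ^ (2:ℝ) ∂μ) ^ ((1:ℝ)/2) + c * (μ Set.univ) ^ ((1:ℝ)/2) with hR
  suffices H : ∫⁻ x, (u x + c) ^ (2:ℝ) ∂μ ≤ R ^ (2:ℝ) by
    calc (∫⁻ x, (u x + c) ^ (2:ℝ) ∂μ) ^ ((1:ℝ)/2)
        ≤ (R ^ (2:ℝ)) ^ ((1:ℝ)/2) := ENNReal.rpow_le_rpow H (by norm_num)
      _ = R := stmt8_sq_half R
  rw [lintegral_def]
  refine iSup_le fun s => iSup_le fun hs => ?_
  set t : α → ℝ≥0∞ := fun x => ((s x) ^ ((1:ℝ)/2) - c) ^ (2:ℝ) with ht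
  have htmeas : Measurable t := by
    have : Measurable fun x => (s x : ℝ≥0∞) := s.measurable
    fun_prop
  have key1 : ∀ x, t x ≤ u x ^ (2:ℝ) := by
    intro x
    have h1 : (s x) ^ ((1:ℝ)/2) ≤ u x + c := by
      calc (s x) ^ ((1:ℝ)/2) ≤ ((u x + c) ^ (2:ℝ)) ^ ((1:ℝ)/2) :=
            ENNReal.rpow_le_rpow (hs x) (by norm_num)
        _ = u x + c := stmt8_sq_half _
    have h2 : (s x) ^ ((1:ℝ)/2) - c ≤ u x := tsub_le_iff_right.mpr h1
    exact ENNReal.rpow_le_rpow h2 (by norm_num)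
  have key2 : ∀ x, (s x : ℝ≥0∞) ≤ (t x ^ ((1:ℝ)/2) + c) ^ (2:ℝ) := by
    intro x
    have h1 : t x ^ ((1:ℝ)/2) = (s x) ^ ((1:ℝ)/2) - c := stmt8_sq_half _
    have h2 : (s x) ^ ((1:ℝ)/2) ≤ t x ^ ((1:ℝ)/2) + c := by
      rw [h1]; exact le_tsub_add
    calc (s x : ℝ≥0∞) = ((s x) ^ ((1:ℝ)/2)) ^ (2:ℝ) := (stmt8_half_sq _).symm
      _ ≤ (t x ^ ((1:ℝ)/2) + c) ^ (2:ℝ) := ENNReal.rpow_le_rpow h2 (by norm_num)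
  have hmink := ENNReal.lintegral_Lp_add_le
    (p := (2:ℝ)) (f := fun x => t x ^ ((1:ℝ)/2)) (g := fun _ => c) (μ := μ)
    ((by fun_prop : Measurable fun x => t x ^ ((1:ℝ)/2)).aemeasurable) aemeasurable_const (by norm_num)
  have e1 : ∫⁻ x, (t x ^ ((1:ℝ)/2)) ^ (2:ℝ) ∂μ ≤ ∫⁻ x, u x ^ (2:ℝ) ∂μ := by
    refine lintegral_mono fun x => ?_
    rw [stmt8_half_sq]; exact key1 x
  have e2 : (∫⁻ _ : α, c ^ (2:ℝ) ∂μ) ^ ((1:ℝ)/2) = c * (μ Set.univ) ^ ((1:ℝ)/2) := by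
    rw [lintegral_const, ENNReal.mul_rpow_of_nonneg _ _ (by norm_num : (0:ℝ) ≤ 1/2), stmt8_sq_half]
  set f₁ : α → ℝ≥0∞ := fun x => t x ^ ((1:ℝ)/2) with hf₁
  set f₂ : α → ℝ≥0∞ := fun _ => c with hf₂
  have step : (∫⁻ x, (s x : ℝ≥0∞) ∂μ) ^ ((1:ℝ)/2) ≤ R := by
    calc (∫⁻ x, (s x : ℝ≥0∞) ∂μ) ^ ((1:ℝ)/2)
        ≤ (∫⁻ x, (f₁ + f₂) x ^ (2:ℝ) ∂μ) ^ ((1:ℝ)/2) := by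
          refine ENNReal.rpow_le_rpow (lintegral_mono fun x => ?_) (by norm_num)
          simpa [hf₁, hf₂] using key2 x
      _ ≤ (∫⁻ x, (t x ^ ((1:ℝ)/2)) ^ (2:ℝ) ∂μ) ^ ((1:ℝ)/2)
            + (∫⁻ _ : α, c ^ (2:ℝ) ∂μ) ^ ((1:ℝ)/2) := by
          simpa [hf₁, hf₂] using hmink
      _ ≤ R := by
          rw [hR, e2]
          exact add_le_add (ENNReal.rpow_le_rpow e1 (by norm_num : (0:ℝ) ≤ 1/2)) le_rfl
  calc s.lintegral μ = ∫⁻ x, (s x : ℝ≥0∞) ∂μ := (s.lintegral_eq_lintegral μ).symm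
    _ = ((∫⁻ x, (s x : ℝ≥0∞) ∂μ) ^ ((1:ℝ)/2)) ^ (2:ℝ) := (stmt8_half_sq _).symm
    _ ≤ R ^ (2:ℝ) := ENNReal.rpow_le_rpow step (by norm_num)

set_option maxHeartbeats 1000000 in
/-- `O(ω^{-1/2})` approximation property of the numerical ray-FEM space built from
NMLA-estimated ray directions: with unit estimated directions `dⱼʰ` satisfying
`‖∇φ(xⱼ)/‖∇φ(xⱼ)‖ − dⱼʰ‖ ≤ C_d ω^{-1/2}`, slownesses `‖∇φ(xⱼ)‖ ≤ η_max`, second-order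
amplitude interpolation `‖A − Σⱼ A(xⱼ)φⱼ‖_{L²(Ω)} ≤ C_A h²`, `ω ≥ 1` and `h ≤ 1/ω`,
the interpolant `u_Iʰ(x) = Σⱼ A(xⱼ)φⱼ(x)e^{iω(φ(xⱼ) + ‖∇φ(xⱼ)‖⟨dⱼʰ, x − xⱼ⟩)}` satisfies
`‖u − u_Iʰ‖_{L²(Ω)} ≤ (C_A + M₂M₀|Ω|^{1/2}/2 + C_d η_max M₀ |Ω|^{1/2}) ω^{-1/2}`. -/
theorem stmt_8 {d : ℕ} (hd : 1 ≤ d) {ι : Type*} (J : Finset ι)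
    (Ω : Set (EuclideanSpace ℝ (Fin d)))
    (hΩmeas : MeasurableSet Ω) (hΩfin : volume Ω < ⊤)
    (h : ℝ) (hh : 0 < h)
    (xj : ι → EuclideanSpace ℝ (Fin d))
    (φj : ι → EuclideanSpace ℝ (Fin d) → ℝ)
    (hφj : ∀ j ∈ J, ∀ x, 0 ≤ φj j x ∧ φj j x ≤ 1)
    (hsum : ∀ x ∈ Ω, ∑ j ∈ J, φj j x = 1)
    (hsupp : ∀ j ∈ J, ∀ x, h < ‖x - xj j‖ → φj j x = 0)
    (A : EuclideanSpace ℝ (Fin d) → ℝ)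
    (M₀ : ℝ) (hM₀ : ∀ j ∈ J, |A (xj j)| ≤ M₀)
    (φ : EuclideanSpace ℝ (Fin d) → ℝ) (hφ : ContDiff ℝ 2 φ)
    (M₂ : ℝ) (hM₂ : ∀ y, ‖fderiv ℝ (fun z => fderiv ℝ φ z) y‖ ≤ M₂)
    (hgrad : ∀ j ∈ J, gradient φ (xj j) ≠ 0)
    (ηmax : ℝ) (hηmax : ∀ j ∈ J, ‖gradient φ (xj j)‖ ≤ ηmax)
    (ω : ℝ) (hω : 1 ≤ ω) (hhω : h ≤ 1 / ω)
    (djh : ι → EuclideanSpace ℝ (Fin d)) (hdjh : ∀ j ∈ J, ‖djh j‖ = 1)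
    (Cd : ℝ)
    (hCd : ∀ j ∈ J,
      ‖(‖gradient φ (xj j)‖)⁻¹ • gradient φ (xj j) - djh j‖ ≤ Cd * ω ^ (-(1/2 : ℝ)))
    (CA : ℝ) (hCA0 : 0 ≤ CA)
    (hCA : eLpNorm (fun x => A x - ∑ j ∈ J, A (xj j) * φj j x) 2 (volume.restrict Ω)
        ≤ ENNReal.ofReal (CA * h ^ 2)) :
    eLpNorm (fun x => (A x : ℂ) * Complex.exp (Complex.I * (ω : ℂ) * (φ x : ℂ))
        - ∑ j ∈ J, (A (xj j) : ℂ) * (φj j x : ℂ)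
            * Complex.exp (Complex.I * (ω : ℂ)
                * ((φ (xj j) + ‖gradient φ (xj j)‖ * ⟪djh j, x - xj j⟫_ℝ : ℝ) : ℂ)))
      2 (volume.restrict Ω)
    ≤ ENNReal.ofReal
        ((CA + M₂ * M₀ * Real.sqrt (volume Ω).toReal / 2
            + Cd * ηmax * M₀ * Real.sqrt (volume Ω).toReal) * ω ^ (-(1/2 : ℝ))) := by
  rcases Ω.eq_empty_or_nonempty with hΩe | ⟨x₀, hx₀⟩
  · simp only [hΩe, Measure.restrict_empty]
    rw [eLpNorm_measure_zero]
    exact zero_le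
  have hJ : ∃ j, j ∈ J := by
    by_contra hc
    push_neg at hc
    have h1 := hsum x₀ hx₀
    rw [Finset.sum_eq_zero (fun j hj => absurd hj (hc j))] at h1
    norm_num at h1
  obtain ⟨j₀, hj₀⟩ := hJ
  have hω0 : (0:ℝ) < ω := lt_of_lt_of_le one_pos hω
  set ωe := ω ^ (-(1/2 : ℝ)) with hωe
  have hωe0 : 0 < ωe := Real.rpow_pos_of_pos hω0 _
  have hM₀0 : 0 ≤ M₀ := le_trans (abs_nonneg _) (hM₀ j₀ hj₀)
  have hM₂0 : 0 ≤ M₂ := le_trans (norm_nonneg (fderiv ℝ (fun z => fderiv ℝ φ z) (xj j₀))) (hM₂ (xj j₀))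
  have hη0 : 0 ≤ ηmax := le_trans (norm_nonneg _) (hηmax j₀ hj₀)
  have hCd0 : 0 ≤ Cd := by
    have h1 : (0:ℝ) ≤ Cd * ωe := le_trans (norm_nonneg _) (hCd j₀ hj₀)
    nlinarith
  set K := (M₂ / 2 + Cd * ηmax) * M₀ * ωe with hK
  have hK0 : 0 ≤ K := by
    have : 0 ≤ M₂ / 2 + Cd * ηmax := by positivity
    positivity
  -- phase error bound
  have hphase : ∀ j ∈ J, ∀ x : EuclideanSpace ℝ (Fin d), ‖x - xj j‖ ≤ h →
      |φ x - (φ (xj j) + ‖gradient φ (xj j)‖ * ⟪djh j, x - xj j⟫_ℝ)|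
        ≤ M₂ * h ^ 2 / 2 + ηmax * (Cd * ωe) * h := by
    intro j hj x hxh
    have htay := stmt8_taylor_bd φ hφ M₂ hM₂ (xj j) x
    have hgradeq : fderiv ℝ φ (xj j) (x - xj j) = ⟪gradient φ (xj j), x - xj j⟫_ℝ := by
      simp [gradient, InnerProductSpace.toDual_symm_apply]
    set G := gradient φ (xj j) with hG
    have hGn : ‖G‖ ≠ 0 := by simpa using hgrad j hj
    have hsmul : G - ‖G‖ • djh j = ‖G‖ • ((‖G‖)⁻¹ • G - djh j) := by
      rw [smul_sub, smul_inv_smul₀ hGn]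
    have hinner : |⟪G, x - xj j⟫_ℝ - ‖G‖ * ⟪djh j, x - xj j⟫_ℝ| ≤ ηmax * (Cd * ωe) * h := by
      have heq : ⟪G, x - xj j⟫_ℝ - ‖G‖ * ⟪djh j, x - xj j⟫_ℝ
          = ⟪G - ‖G‖ • djh j, x - xj j⟫_ℝ := by
        rw [inner_sub_left, real_inner_smul_left]
      rw [heq]
      calc |⟪G - ‖G‖ • djh j, x - xj j⟫_ℝ| ≤ ‖G - ‖G‖ • djh j‖ * ‖x - xj j‖ :=
            abs_real_inner_le_norm _ _
        _ ≤ (ηmax * (Cd * ωe)) * h := by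
            refine mul_le_mul ?_ hxh (norm_nonneg _) (by positivity)
            rw [hsmul, norm_smul, Real.norm_eq_abs, _root_.abs_of_nonneg (norm_nonneg G)]
            exact mul_le_mul (hηmax j hj) (hCd j hj) (norm_nonneg _) hη0
    have hdecomp : φ x - (φ (xj j) + ‖G‖ * ⟪djh j, x - xj j⟫_ℝ)
        = (φ x - φ (xj j) - fderiv ℝ φ (xj j) (x - xj j))
          + (⟪G, x - xj j⟫_ℝ - ‖G‖ * ⟪djh j, x - xj j⟫_ℝ) := by
      rw [hgradeq]; ring
    rw [hdecomp]
    have hsq : M₂ * ‖x - xj j‖ ^ 2 / 2 ≤ M₂ * h ^ 2 / 2 := by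
      have : ‖x - xj j‖ ^ 2 ≤ h ^ 2 := by
        exact pow_le_pow_left₀ (norm_nonneg _) hxh 2
      nlinarith
    calc |(φ x - φ (xj j) - fderiv ℝ φ (xj j) (x - xj j))
          + (⟪G, x - xj j⟫_ℝ - ‖G‖ * ⟪djh j, x - xj j⟫_ℝ)|
        ≤ |φ x - φ (xj j) - fderiv ℝ φ (xj j) (x - xj j)|
          + |⟪G, x - xj j⟫_ℝ - ‖G‖ * ⟪djh j, x - xj j⟫_ℝ| := abs_add_le _ _
      _ ≤ M₂ * h ^ 2 / 2 + ηmax * (Cd * ωe) * h :=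
          add_le_add (le_trans htay hsq) hinner
  -- scalar phase factor bound
  have hscal : ω * (M₂ * h ^ 2 / 2 + ηmax * (Cd * ωe) * h) ≤ (M₂ / 2 + Cd * ηmax) * ωe := by
    have h1 : ω * h ≤ 1 := by
      rw [mul_comm]
      exact (le_div_iff₀ hω0).mp hhω
    have hinv : ω⁻¹ ≤ ωe := by
      rw [hωe, ← Real.rpow_neg_one ω]
      exact Real.rpow_le_rpow_of_exponent_le hω (by norm_num)
    have h2 : ω * h ^ 2 ≤ ωe := by
      have e1 : h ≤ ω⁻¹ := by rwa [one_div] at hhω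
      have e2 : ω * h ^ 2 ≤ ω⁻¹ := by nlinarith [hh.le, inv_nonneg.mpr hω0.le]
      linarith
    calc ω * (M₂ * h ^ 2 / 2 + ηmax * (Cd * ωe) * h)
        = M₂ / 2 * (ω * h ^ 2) + (Cd * ηmax * ωe) * (ω * h) := by ring
      _ ≤ M₂ / 2 * ωe + (Cd * ηmax * ωe) * 1 :=
          add_le_add (mul_le_mul_of_nonneg_left h2 (by positivity))
            (mul_le_mul_of_nonneg_left h1 (by positivity))
      _ = (M₂ / 2 + Cd * ηmax) * ωe := by ring
  -- pointwise bound on Ω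
  have hpt : ∀ x ∈ Ω,
      ‖(A x : ℂ) * Complex.exp (Complex.I * (ω : ℂ) * (φ x : ℂ))
        - ∑ j ∈ J, (A (xj j) : ℂ) * (φj j x : ℂ)
            * Complex.exp (Complex.I * (ω : ℂ)
                * ((φ (xj j) + ‖gradient φ (xj j)‖ * ⟪djh j, x - xj j⟫_ℝ : ℝ) : ℂ))‖
      ≤ |A x - ∑ j ∈ J, A (xj j) * φj j x| + K := by
    intro x hx
    set e : ℂ := Complex.exp (Complex.I * (ω : ℂ) * (φ x : ℂ)) with he_def
    set ej : ι → ℂ := fun j => Complex.exp (Complex.I * (ω : ℂ)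
        * ((φ (xj j) + ‖gradient φ (xj j)‖ * ⟪djh j, x - xj j⟫_ℝ : ℝ) : ℂ)) with hej_def
    have hF : (A x : ℂ) * e - ∑ j ∈ J, (A (xj j) : ℂ) * (φj j x : ℂ) * ej j
        = ((A x - ∑ j ∈ J, A (xj j) * φj j x : ℝ) : ℂ) * e
          + ∑ j ∈ J, (A (xj j) : ℂ) * (φj j x : ℂ) * (e - ej j) := by
      have h1 : ∑ j ∈ J, (A (xj j) : ℂ) * (φj j x : ℂ) * (e - ej j)
          = (∑ j ∈ J, (A (xj j) : ℂ) * (φj j x : ℂ)) * e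
            - ∑ j ∈ J, (A (xj j) : ℂ) * (φj j x : ℂ) * ej j := by
        rw [Finset.sum_mul, ← Finset.sum_sub_distrib]
        exact Finset.sum_congr rfl fun j _ => by ring
      rw [h1]
      push_cast
      ring
    rw [hF]
    have he1 : ‖e‖ = 1 := by
      have harg : Complex.I * (ω : ℂ) * (φ x : ℂ) = ((ω * φ x : ℝ) : ℂ) * Complex.I := by
        push_cast; ring
      rw [he_def, harg, Complex.norm_exp_ofReal_mul_I]
    have hterm : ∀ j ∈ J, ‖(A (xj j) : ℂ) * (φj j x : ℂ) * (e - ej j)‖ ≤ φj j x * K := by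
      intro j hj
      by_cases hz : φj j x = 0
      · simp [hz]
      have hxh : ‖x - xj j‖ ≤ h := by
        by_contra hc
        exact hz (hsupp j hj x (not_le.mp hc))
      have hexp : ‖e - ej j‖ ≤ (M₂ / 2 + Cd * ηmax) * ωe := by
        set L := φ (xj j) + ‖gradient φ (xj j)‖ * ⟪djh j, x - xj j⟫_ℝ with hL
        have harg1 : Complex.I * (ω : ℂ) * (φ x : ℂ) = Complex.I * ((ω * φ x : ℝ) : ℂ) := by
          push_cast; ring
        have harg2 : Complex.I * (ω : ℂ) * (L : ℂ) = Complex.I * ((ω * L : ℝ) : ℂ) := by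
          push_cast; ring
        have hle := stmt8_exp_I_lip (ω * φ x) (ω * L)
        rw [he_def, hej_def]
        simp only []
        rw [harg1, harg2]
        refine le_trans hle ?_
        have : |ω * φ x - ω * L| = ω * |φ x - L| := by
          rw [← mul_sub, abs_mul, abs_of_pos hω0]
        rw [this]
        refine le_trans ?_ hscal
        exact mul_le_mul_of_nonneg_left (hphase j hj x hxh) hω0.le
      have hφjx := hφj j hj x
      calc ‖(A (xj j) : ℂ) * (φj j x : ℂ) * (e - ej j)‖
          = |A (xj j)| * |φj j x| * ‖e - ej j‖ := by
            rw [norm_mul, norm_mul, Complex.norm_real, Complex.norm_real,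
              Real.norm_eq_abs, Real.norm_eq_abs]
        _ = |A (xj j)| * φj j x * ‖e - ej j‖ := by rw [_root_.abs_of_nonneg hφjx.1]
        _ ≤ M₀ * φj j x * ((M₂ / 2 + Cd * ηmax) * ωe) := by
            have hb : 0 ≤ (M₂ / 2 + Cd * ηmax) * ωe := by positivity
            refine mul_le_mul (mul_le_mul_of_nonneg_right (hM₀ j hj) hφjx.1) hexp
              (norm_nonneg _) (mul_nonneg hM₀0 hφjx.1)
        _ = φj j x * K := by rw [hK]; ring
    calc ‖((A x - ∑ j ∈ J, A (xj j) * φj j x : ℝ) : ℂ) * e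
          + ∑ j ∈ J, (A (xj j) : ℂ) * (φj j x : ℂ) * (e - ej j)‖
        ≤ ‖((A x - ∑ j ∈ J, A (xj j) * φj j x : ℝ) : ℂ) * e‖
          + ‖∑ j ∈ J, (A (xj j) : ℂ) * (φj j x : ℂ) * (e - ej j)‖ := norm_add_le _ _
      _ ≤ |A x - ∑ j ∈ J, A (xj j) * φj j x| + K := by
          refine add_le_add ?_ ?_
          · rw [norm_mul, he1, mul_one, Complex.norm_real, Real.norm_eq_abs]
          · calc ‖∑ j ∈ J, (A (xj j) : ℂ) * (φj j x : ℂ) * (e - ej j)‖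
                ≤ ∑ j ∈ J, ‖(A (xj j) : ℂ) * (φj j x : ℂ) * (e - ej j)‖ :=
                  norm_sum_le _ _
              _ ≤ ∑ j ∈ J, φj j x * K := Finset.sum_le_sum hterm
              _ = K := by rw [← Finset.sum_mul, hsum x hx, one_mul]
  -- pass to L² norms
  set μ := volume.restrict Ω with hμ
  set gfun : EuclideanSpace ℝ (Fin d) → ℝ := fun x => A x - ∑ j ∈ J, A (xj j) * φj j x
    with hgfun
  set u : EuclideanSpace ℝ (Fin d) → ℝ≥0∞ := fun x => (‖gfun x‖₊ : ℝ≥0∞) with hu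
  set c : ℝ≥0∞ := ENNReal.ofReal K with hc
  have step1 : eLpNorm (fun x => (A x : ℂ) * Complex.exp (Complex.I * (ω : ℂ) * (φ x : ℂ))
        - ∑ j ∈ J, (A (xj j) : ℂ) * (φj j x : ℂ)
            * Complex.exp (Complex.I * (ω : ℂ)
                * ((φ (xj j) + ‖gradient φ (xj j)‖ * ⟪djh j, x - xj j⟫_ℝ : ℝ) : ℂ))) 2 μ
      ≤ eLpNorm (fun x => |gfun x| + K) 2 μ := by
    refine eLpNorm_mono_ae ?_
    rw [hμ]
    refine (ae_restrict_iff' hΩmeas).mpr (Filter.Eventually.of_forall fun x hx => ?_)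
    have h1 := hpt x hx
    have h2 : |gfun x| + K ≤ ‖|gfun x| + K‖ := le_abs_self _
    exact le_trans h1 h2
  have hnn : ∀ (f : EuclideanSpace ℝ (Fin d) → ℝ),
      eLpNorm f 2 μ = (∫⁻ x, (‖f x‖₊ : ℝ≥0∞) ^ (2:ℝ) ∂μ) ^ ((1:ℝ)/2) := by
    intro f
    rw [eLpNorm_eq_lintegral_rpow_enorm_toReal (by norm_num) (by norm_num)]
    simp only [enorm_eq_nnnorm]
    norm_num
  have step2 : eLpNorm (fun x => |gfun x| + K) 2 μ
      ≤ (∫⁻ x, (u x + c) ^ (2:ℝ) ∂μ) ^ ((1:ℝ)/2) := by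
    rw [hnn]
    refine ENNReal.rpow_le_rpow (lintegral_mono fun x => ?_) (by norm_num)
    refine ENNReal.rpow_le_rpow ?_ (by norm_num)
    calc (‖|gfun x| + K‖₊ : ℝ≥0∞) ≤ (‖|gfun x|‖₊ : ℝ≥0∞) + (‖K‖₊ : ℝ≥0∞) := by
          rw [← ENNReal.coe_add]
          exact_mod_cast nnnorm_add_le _ _
      _ = u x + c := by
          rw [hu, hc, Real.nnnorm_abs, ← enorm_eq_nnnorm K, Real.enorm_eq_ofReal hK0]
  have step3 : (∫⁻ x, (u x + c) ^ (2:ℝ) ∂μ) ^ ((1:ℝ)/2)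
      ≤ (∫⁻ x, u x ^ (2:ℝ) ∂μ) ^ ((1:ℝ)/2) + c * (μ Set.univ) ^ ((1:ℝ)/2) :=
    stmt8_lint_sq_add_const μ u c
  have step4 : (∫⁻ x, u x ^ (2:ℝ) ∂μ) ^ ((1:ℝ)/2) ≤ ENNReal.ofReal (CA * h ^ 2) := by
    rw [← hnn gfun]
    exact hCA
  have hμuniv : μ Set.univ = volume Ω := Measure.restrict_apply_univ _
  -- final arithmetic
  set V := (volume Ω).toReal with hV
  have hV0 : 0 ≤ V := ENNReal.toReal_nonneg
  have hvol : volume Ω = ENNReal.ofReal V := (ENNReal.ofReal_toReal hΩfin.ne).symm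
  have hrt : (volume Ω) ^ ((1:ℝ)/2) = ENNReal.ofReal (Real.sqrt V) := by
    rw [hvol, ENNReal.ofReal_rpow_of_nonneg hV0 (by norm_num), Real.sqrt_eq_rpow]
  have hfinal : ENNReal.ofReal (CA * h ^ 2) + c * (volume Ω) ^ ((1:ℝ)/2)
      ≤ ENNReal.ofReal ((CA + M₂ * M₀ * Real.sqrt V / 2
          + Cd * ηmax * M₀ * Real.sqrt V) * ωe) := by
    rw [hrt, hc, ← ENNReal.ofReal_mul hK0, ← ENNReal.ofReal_add (by positivity) (by positivity)]
    refine ENNReal.ofReal_le_ofReal ?_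
    have hh2 : h ^ 2 ≤ ωe := by
      have e1 : h ≤ ω⁻¹ := by rwa [one_div] at hhω
      have e2 : ω⁻¹ ≤ 1 := inv_le_one_of_one_le₀ hω
      have e3 : ω⁻¹ ≤ ωe := by
        rw [hωe, ← Real.rpow_neg_one ω]
        exact Real.rpow_le_rpow_of_exponent_le hω (by norm_num)
      nlinarith [hh.le, inv_nonneg.mpr hω0.le]
    have hca : CA * h ^ 2 ≤ CA * ωe := mul_le_mul_of_nonneg_left hh2 hCA0
    rw [hK]
    calc CA * h ^ 2 + (M₂ / 2 + Cd * ηmax) * M₀ * ωe * Real.sqrt V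
        ≤ CA * ωe + (M₂ / 2 + Cd * ηmax) * M₀ * ωe * Real.sqrt V := by linarith
      _ = (CA + M₂ * M₀ * Real.sqrt V / 2 + Cd * ηmax * M₀ * Real.sqrt V) * ωe := by ring
  calc eLpNorm (fun x => (A x : ℂ) * Complex.exp (Complex.I * (ω : ℂ) * (φ x : ℂ))
        - ∑ j ∈ J, (A (xj j) : ℂ) * (φj j x : ℂ)
            * Complex.exp (Complex.I * (ω : ℂ)
                * ((φ (xj j) + ‖gradient φ (xj j)‖ * ⟪djh j, x - xj j⟫_ℝ : ℝ) : ℂ))) 2 μ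
      ≤ eLpNorm (fun x => |gfun x| + K) 2 μ := step1
    _ ≤ (∫⁻ x, (u x + c) ^ (2:ℝ) ∂μ) ^ ((1:ℝ)/2) := step2
    _ ≤ (∫⁻ x, u x ^ (2:ℝ) ∂μ) ^ ((1:ℝ)/2) + c * (μ Set.univ) ^ ((1:ℝ)/2) := step3
    _ ≤ ENNReal.ofReal (CA * h ^ 2) + c * (volume Ω) ^ ((1:ℝ)/2) := by
        rw [hμuniv]
        exact add_le_add step4 le_rfl
    _ ≤ ENNReal.ofReal ((CA + M₂ * M₀ * Real.sqrt V / 2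
          + Cd * ηmax * M₀ * Real.sqrt V) * ωe) := hfinal
end

section
/- Let L ≥ 1 be a natural number, B₁ ∈ ℂ with B₁ ≠ 0, θ₁ ∈ ℝ, and let e : ℝ → ℂ satisfy |e(θ)| ≤ η for all θ, where η < |B₁|/4. Define G(θ) := B₁·S_L(θ − θ₁) + e(θ). Then for every θ* ∈ ℝ with |G(θ*)| ≥ |G(θ₁)|, there exists an integer m such that |θ* − θ₁ − 2πm| ≤ 2π/(2L+1). In particular any maximizer of |G| lies within angular distance 2π/(2L+1) of θ₁ modulo 2π. -/
open Complex
open scoped BigOperators Real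

/-- The normalized Dirichlet kernel `S_L(θ) = (2L+1)⁻¹ Σ_{l=−L}^{L} e^{ilθ}`. -/
noncomputable def dirichletS (L : ℕ) (θ : ℝ) : ℂ :=
  (2 * (L : ℂ) + 1)⁻¹ * ∑ l ∈ Finset.Icc (-(L : ℤ)) (L : ℤ),
    Complex.exp (Complex.I * (l : ℂ) * (θ : ℂ))

lemma twoL1_ne (L : ℕ) : (2 * (L : ℂ) + 1) ≠ 0 := by
  have : ((2 * L + 1 : ℕ) : ℂ) ≠ 0 := Nat.cast_ne_zero.2 (by omega)
  push_cast at this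
  convert this using 2

lemma dirichletS_zero (L : ℕ) : dirichletS L 0 = 1 := by
  simp [dirichletS]
  have hc : ((L : ℤ) + 1 + L).toNat = 2 * L + 1 := by omega
  rw [hc, show ((2 * L + 1 : ℕ) : ℂ) = 2 * (L : ℂ) + 1 by push_cast; ring,
    inv_mul_cancel₀ (twoL1_ne L)]

lemma abs_exp_I_sub_one (x : ℝ) :
    ‖Complex.exp (Complex.I * x) - 1‖ = 2 * |Real.sin (x / 2)| := by
  have h : Complex.exp (Complex.I * x) - 1
      = Complex.ofReal (Real.cos x - 1) + Complex.ofReal (Real.sin x) * Complex.I := by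
    rw [mul_comm, Complex.exp_mul_I]
    push_cast
    ring
  have habs2 : (‖Complex.exp (Complex.I * x) - 1‖) ^ 2
      = (Real.cos x - 1) ^ 2 + (Real.sin x) ^ 2 := by
    rw [h, ← Complex.normSq_eq_norm_sq, Complex.normSq_add_mul_I]
  have hc2 : Real.cos x = 2 * Real.cos (x / 2) ^ 2 - 1 := by
    have := Real.cos_two_mul (x / 2)
    rw [show 2 * (x / 2) = x by ring] at this
    exact this
  have hpyth := Real.sin_sq_add_cos_sq (x / 2)
  have hsq : (‖Complex.exp (Complex.I * x) - 1‖) ^ 2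
      = (2 * |Real.sin (x / 2)|) ^ 2 := by
    rw [habs2, mul_pow, _root_.sq_abs]
    nlinarith [Real.sin_sq_add_cos_sq x]
  have h1 : (0:ℝ) ≤ ‖Complex.exp (Complex.I * x) - 1‖ := norm_nonneg _
  have h2 : (0:ℝ) ≤ 2 * |Real.sin (x / 2)| := by positivity
  nlinarith [hsq]

lemma dirichletS_periodic (L : ℕ) (θ : ℝ) (m : ℤ) :
    dirichletS L (θ + 2 * π * m) = dirichletS L θ := by
  unfold dirichletS
  congr 1
  refine Finset.sum_congr rfl fun l _ => ?_
  have : Complex.I * (l : ℂ) * ((θ + 2 * π * m : ℝ) : ℂ)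
      = Complex.I * (l : ℂ) * (θ : ℂ) + ((l * m : ℤ) : ℂ) * (2 * π * Complex.I) := by
    push_cast
    ring
  rw [this, Complex.exp_add, Complex.exp_int_mul_two_pi_mul_I, mul_one]

lemma abs_dirichletS_le_half (L : ℕ) (hL : 1 ≤ L) (θ : ℝ)
    (hθ1 : 2 * π / (2 * L + 1) ≤ |θ|) (hθ2 : |θ| ≤ π) :
    ‖dirichletS L θ‖ ≤ 1 / 2 := by
  have hπ := Real.pi_pos
  have hLpos : (0:ℝ) < 2 * L + 1 := by positivity
  have hθpos : 0 < |θ| := lt_of_lt_of_le (by positivity) hθ1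
  set z : ℂ := Complex.exp (Complex.I * θ) with hz
  have hz0 : z ≠ 0 := Complex.exp_ne_zero _
  have hz1 : z ≠ 1 := by
    intro hzz
    rw [hz, Complex.exp_eq_one_iff] at hzz
    obtain ⟨n, hn⟩ := hzz
    have him := congrArg Complex.im hn
    simp at him
    -- him : θ = n * (2 * π)  (in some form)
    have hθn : θ = 2 * π * n := by linarith [him]
    have : n = 0 := by
      by_contra hn0
      have h1 : (1:ℝ) ≤ |(n:ℝ)| := by
        exact_mod_cast Int.one_le_abs (by exact_mod_cast hn0)
      have : 2 * π ≤ |θ| := by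
        rw [hθn, abs_mul, abs_of_pos (by positivity : (0:ℝ) < 2*π)]
        nlinarith
      linarith
    rw [this] at hθn
    simp at hθn
    rw [hθn] at hθpos
    simp at hθpos
  -- reindex sum
  have hmap : Finset.Icc (-(L : ℤ)) (L : ℤ)
      = Finset.map ⟨fun n : ℕ => (n : ℤ) - L, fun a b h => by
          simp only at h; omega⟩ (Finset.range (2 * L + 1)) := by
    ext n
    simp only [Finset.mem_map, Finset.mem_range, Finset.mem_Icc, Function.Embedding.coeFn_mk]
    constructor
    · intro ⟨h1, h2⟩; exact ⟨(n + L).toNat, by omega, by exact (show ((n + L).toNat : ℤ) - L = n by omega)⟩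
    · rintro ⟨a, ha, rfl⟩; show -(L:ℤ) ≤ (a:ℤ) - L ∧ (a:ℤ) - L ≤ L; omega
  have hsum : ∑ l ∈ Finset.Icc (-(L : ℤ)) (L : ℤ), Complex.exp (Complex.I * (l : ℂ) * (θ : ℂ))
      = z ^ (-(L:ℤ)) * ((z ^ (2 * L + 1) - 1) / (z - 1)) := by
    rw [hmap, Finset.sum_map]
    have hterm : ∀ j : ℕ, Complex.exp (Complex.I * (((j : ℤ) - L : ℤ) : ℂ) * (θ : ℂ))
        = z ^ (-(L:ℤ)) * z ^ j := by
      intro j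
      have h1 : Complex.I * (((j : ℤ) - L : ℤ) : ℂ) * (θ : ℂ)
          = (((j : ℤ) - L : ℤ) : ℂ) * (Complex.I * θ) := by push_cast; ring
      rw [h1, Complex.exp_int_mul, ← hz]
      rw [show ((j : ℤ) - L : ℤ) = (j : ℤ) + (-(L:ℤ)) by ring, zpow_add₀ hz0]
      rw [zpow_natCast]
      ring
    refine (Finset.sum_congr rfl fun j _ => hterm j).trans ?_
    rw [← Finset.mul_sum, geom_sum_eq hz1]
  have habs_zpow : ‖z ^ (-(L:ℤ))‖ = 1 := by
    rw [norm_zpow, hz, Complex.norm_exp]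
    simp
  have hnum : ‖z ^ (2 * L + 1) - 1‖ ≤ 2 := by
    have h2 : z ^ (2 * L + 1) = Complex.exp (Complex.I * ((2 * L + 1 : ℕ) * θ : ℝ)) := by
      rw [hz, ← Complex.exp_nat_mul]
      congr 1
      push_cast
      ring
    rw [h2, abs_exp_I_sub_one]
    have := Real.abs_sin_le_one ((2 * L + 1 : ℕ) * θ / 2)
    linarith
  have hden : 4 / (2 * L + 1) ≤ ‖z - 1‖ := by
    rw [hz, abs_exp_I_sub_one]
    have hhalf : |θ / 2| ≤ π / 2 := by
      rw [abs_div, _root_.abs_two]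
      linarith [abs_nonneg θ]
    have hjordan := Real.mul_abs_le_abs_sin hhalf
    have heq : 2 / π * |θ / 2| = |θ| / π := by
      rw [abs_div, _root_.abs_two]
      field_simp
    rw [heq] at hjordan
    have h3 : 2 / (2 * L + 1) ≤ |θ| / π := by
      rw [div_le_div_iff₀ hLpos hπ]
      rw [div_le_iff₀ hLpos] at hθ1
      linarith
    have h4 : 2 / (2 * L + 1) ≤ |Real.sin (θ / 2)| := le_trans h3 hjordan
    rw [div_le_iff₀ hLpos] at h4 ⊢
    linarith
  have hden0 : (0:ℝ) < ‖z - 1‖ :=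
    lt_of_lt_of_le (by positivity) hden
  have habs_sum : ‖∑ l ∈ Finset.Icc (-(L : ℤ)) (L : ℤ),
      Complex.exp (Complex.I * (l : ℂ) * (θ : ℂ))‖ ≤ (2 * L + 1) / 2 := by
    rw [hsum, norm_mul, habs_zpow, one_mul, norm_div]
    rw [div_le_div_iff₀ hden0 (by norm_num : (0:ℝ) < 2)]
    calc ‖z ^ (2 * L + 1) - 1‖ * 2 ≤ 2 * 2 := by linarith
      _ = (2 * L + 1) * (4 / (2 * L + 1)) := by field_simp; ring
      _ ≤ (2 * L + 1) * ‖z - 1‖ := by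
          exact mul_le_mul_of_nonneg_left hden (le_of_lt hLpos)
  unfold dirichletS
  rw [norm_mul, norm_inv]
  have habs21 : ‖2 * (L : ℂ) + 1‖ = 2 * L + 1 := by
    rw [show (2 * (L : ℂ) + 1) = ((2 * L + 1 : ℝ) : ℂ) by push_cast; ring,
      Complex.norm_real, Real.norm_eq_abs, abs_of_pos hLpos]
  rw [habs21]
  calc (2 * (L:ℝ) + 1)⁻¹ * ‖_‖
      ≤ (2 * (L:ℝ) + 1)⁻¹ * ((2 * L + 1) / 2) := by gcongr
    _ = 1 / 2 := by field_simp

/-- Stability of NMLA peak picking for a single wave: if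
`G(θ) = B₁S_L(θ − θ₁) + e(θ)` with `|e| ≤ η < |B₁|/4`, then any `θ*` with
`|G(θ*)| ≥ |G(θ₁)|` (in particular any maximizer of `|G|`) lies within angular
distance `2π/(2L+1)` of `θ₁` modulo `2π`. -/
theorem stmt_12 (L : ℕ) (hL : 1 ≤ L) (B₁ : ℂ) (hB₁ : B₁ ≠ 0) (θ₁ : ℝ)
    (e : ℝ → ℂ) (η : ℝ) (he : ∀ θ : ℝ, ‖e θ‖ ≤ η)
    (hη : η < ‖B₁‖ / 4) :
    ∀ θs : ℝ,
      ‖B₁ * dirichletS L (θ₁ - θ₁) + e θ₁‖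
        ≤ ‖B₁ * dirichletS L (θs - θ₁) + e θs‖ →
      ∃ m : ℤ, |θs - θ₁ - 2 * π * m| ≤ 2 * π / (2 * L + 1) := by
  intro θs hle
  have hπ := Real.pi_pos
  have hLpos : (0:ℝ) < 2 * L + 1 := by positivity
  set δ := θs - θ₁ with hδ
  set m : ℤ := round (δ / (2 * π)) with hm
  set φ := δ - 2 * π * m with hφ
  by_cases hcase : |φ| ≤ 2 * π / (2 * L + 1)
  · exact ⟨m, hcase⟩
  push_neg at hcase
  exfalso
  have hφπ : |φ| ≤ π := by
    have h1 : |δ / (2 * π) - m| ≤ 1 / 2 := abs_sub_round _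
    have hφeq : φ = 2 * π * (δ / (2 * π) - m) := by
      rw [hφ]
      field_simp
    have h2 : |φ| = 2 * π * |δ / (2 * π) - m| := by
      rw [hφeq, abs_mul, abs_of_pos (by positivity : (0:ℝ) < 2 * π)]
    rw [h2]
    nlinarith
  have hhalf := abs_dirichletS_le_half L hL φ (le_of_lt hcase) hφπ
  have hper : dirichletS L δ = dirichletS L φ := by
    have h3 : δ = φ + 2 * π * m := by rw [hφ]; ring
    rw [h3, dirichletS_periodic]
  rw [sub_self, dirichletS_zero, hper] at hle
  have hB : (0:ℝ) < ‖B₁‖ := by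
    simpa [norm_pos_iff] using hB₁
  have hη0 : 0 ≤ η := le_trans (norm_nonneg _) (he θ₁)
  have hlow : ‖B₁‖ - η ≤ ‖B₁ * 1 + e θ₁‖ := by
    rw [mul_one]
    have h4 := norm_add_le (B₁ + e θ₁) (-(e θ₁))
    simp only [add_neg_cancel_right, norm_neg] at h4
    have h5 := he θ₁
    linarith
  have hupp : ‖B₁ * dirichletS L φ + e θs‖ ≤ ‖B₁‖ / 2 + η := by
    calc ‖B₁ * dirichletS L φ + e θs‖
        ≤ ‖B₁ * dirichletS L φ‖ + ‖e θs‖ := norm_add_le _ _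
      _ ≤ ‖B₁‖ * (1/2) + η := by
          rw [norm_mul]
          gcongr
          exact he θs
      _ = ‖B₁‖ / 2 + η := by ring
  linarith
end

section
/- Let d ≥ 1, x₀ ∈ E = EuclideanSpace ℝ (Fin d), r > 0, and let A : E → ℝ be continuously differentiable and φ : E → ℝ twice continuously differentiable on B = closedBall(x₀, r). Set C₁ := sup_B ‖∇A‖ and C₃ := sup_B ‖∇²φ‖ (operator norm). Then for every ω > 0, every unit vector ŝ ∈ E, and x = x₀ + r ŝ, |A(x)·exp(i ω φ(x)) − A(x₀)·exp(i ω (φ(x₀) + r⟨∇φ(x₀), ŝ⟩))| ≤ r C₁ + (ω r²/2)·|A(x₀)|·C₃. -/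
open Complex Metric
open scoped InnerProductSpace BigOperators

lemma exp_I_lip (a b : ℝ) :
    ‖Complex.exp ((a : ℂ) * Complex.I) - Complex.exp ((b : ℂ) * Complex.I)‖
      ≤ |a - b| := by
  have hd : ∀ t : ℝ, HasDerivAt (fun t : ℝ => Complex.exp ((t : ℂ) * Complex.I))
      (Complex.exp ((t : ℂ) * Complex.I) * Complex.I) t := by
    intro t
    have h1 : HasDerivAt (fun t : ℝ => (t : ℂ) * Complex.I) Complex.I t := by
      simpa using (Complex.ofRealCLM.hasDerivAt (x := t)).mul_const Complex.I
    simpa [mul_comm] using h1.cexp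
  have hlip : LipschitzWith 1 (fun t : ℝ => Complex.exp ((t : ℂ) * Complex.I)) := by
    refine lipschitzWith_of_nnnorm_deriv_le (fun t => (hd t).differentiableAt) (fun t => ?_)
    rw [(hd t).deriv]
    simp [← NNReal.coe_le_coe, Complex.norm_exp]
  have := hlip.dist_le_mul a b
  simpa [dist_eq_norm, Complex.dist_eq] using this

lemma taylor2_aux {E : Type*} [NormedAddCommGroup E] [NormedSpace ℝ E] {s : Set E}
    (hs : Convex ℝ s) {φ : E → ℝ} (hφd : DifferentiableOn ℝ φ s)
    (hf'd : DifferentiableOn ℝ (fun z => fderivWithin ℝ φ s z) s)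
    {C : ℝ}
    (hC : ∀ y ∈ s, ‖fderivWithin ℝ (fun z => fderivWithin ℝ φ s z) s y‖ ≤ C)
    {x₀ x : E} (hx₀ : x₀ ∈ s) (hx : x ∈ s) :
    |φ x - φ x₀ - fderivWithin ℝ φ s x₀ (x - x₀)| ≤ C / 2 * ‖x - x₀‖ ^ 2 := by
  set v := x - x₀ with hv
  set f' : E → E →L[ℝ] ℝ := fun z => fderivWithin ℝ φ s z with hf'
  have hseg : ∀ t ∈ Set.Icc (0:ℝ) 1, x₀ + t • v ∈ s := fun t ht =>
    hs.add_smul_sub_mem hx₀ hx ht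
  have hmvt : ∀ y ∈ s, ‖f' y - f' x₀‖ ≤ C * ‖y - x₀‖ := fun y hy =>
    hs.norm_image_sub_le_of_norm_fderivWithin_le hf'd hC hx₀ hy
  set F : ℝ → ℝ := fun t => φ (x₀ + t • v) - φ x₀ - t * (f' x₀ v) with hF
  have hF' : ∀ t ∈ Set.Icc (0:ℝ) 1,
      HasDerivWithinAt F (f' (x₀ + t • v) v - f' x₀ v) (Set.Icc (0:ℝ) 1) t := by
    intro t ht
    have hc : HasDerivWithinAt (fun t : ℝ => x₀ + t • v) v (Set.Icc (0:ℝ) 1) t := by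
      simpa using (((hasDerivAt_id t).smul_const v).const_add x₀).hasDerivWithinAt
    have h1 : HasDerivWithinAt (fun t : ℝ => φ (x₀ + t • v)) (f' (x₀ + t • v) v)
        (Set.Icc (0:ℝ) 1) t :=
      (hφd _ (hseg t ht)).hasFDerivWithinAt.comp_hasDerivWithinAt t hc hseg
    have h2 : HasDerivWithinAt (fun t : ℝ => φ x₀ + t * (f' x₀ v)) (f' x₀ v)
        (Set.Icc (0:ℝ) 1) t := by
      simpa using (((hasDerivAt_id t).mul_const (f' x₀ v)).const_add (φ x₀)).hasDerivWithinAt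
    simp only [hF, sub_sub]; exact h1.sub h2
  have key : ∀ t ∈ Set.Icc (0:ℝ) 1, ‖F t‖ ≤ C * ‖v‖ ^ 2 * t ^ 2 / 2 := by
    have hB : ∀ t : ℝ, HasDerivAt (fun t => C * ‖v‖ ^ 2 * t ^ 2 / 2) (C * ‖v‖ ^ 2 * t) t := by
      intro t
      have := ((hasDerivAt_pow 2 t).const_mul (C * ‖v‖ ^ 2)).div_const 2
      exact this.congr_deriv (by rw [show (2:ℕ) - 1 = 1 from rfl]; push_cast; ring)
    refine image_norm_le_of_norm_deriv_right_le_deriv_boundary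
      (fun t ht => (hF' t ht).continuousWithinAt)
      (fun t ht => (hF' t (Set.Ico_subset_Icc_self ht)).mono_of_mem_nhdsWithin
        (Icc_mem_nhdsGE_of_mem ht))
      (by simp [hF]) hB ?_
    intro t ht
    have ht0 : (0:ℝ) ≤ t := ht.1
    have h1 : ‖f' (x₀ + t • v) v - f' x₀ v‖ ≤ ‖f' (x₀ + t • v) - f' x₀‖ * ‖v‖ := by
      simpa using (f' (x₀ + t • v) - f' x₀).le_opNorm v
    have h2 : ‖f' (x₀ + t • v) - f' x₀‖ ≤ C * (t * ‖v‖) := by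
      have := hmvt _ (hseg t ⟨ht.1, ht.2.le⟩)
      simpa [norm_smul, _root_.abs_of_nonneg ht0] using this
    calc ‖f' (x₀ + t • v) v - f' x₀ v‖ ≤ C * (t * ‖v‖) * ‖v‖ := by
          refine h1.trans (mul_le_mul_of_nonneg_right h2 (norm_nonneg v))
      _ = C * ‖v‖ ^ 2 * t := by ring
  have := key 1 ⟨zero_le_one, le_rfl⟩
  have hx1 : x₀ + v = x := by simp [hv]
  have heq : C * ‖v‖ ^ 2 * 1 ^ 2 / 2 = C / 2 * ‖v‖ ^ 2 := by ring
  rw [heq] at this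
  simpa [hF, hx1, Real.norm_eq_abs] using this

/-- Perturbation of a smooth curved wave front `u = A e^{iωφ}` from its local plane-wave
approximation `u₀(x) = A(x₀)e^{iω(φ(x₀) + ⟨∇φ(x₀), x − x₀⟩)}`, sampled on the circle of
radius `r` around `x₀`: for every unit vector `ŝ` and `x = x₀ + rŝ`,
`|u(x) − u₀(x)| ≤ rC₁ + (ωr²/2)|A(x₀)|C₃` where `C₁ = sup_B ‖∇A‖`, `C₃ = sup_B ‖∇²φ‖`. -/
theorem stmt_13 {d : ℕ} (hd : 1 ≤ d)
    (x₀ : EuclideanSpace ℝ (Fin d)) (r : ℝ) (hr : 0 < r)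
    (A φ : EuclideanSpace ℝ (Fin d) → ℝ)
    (hA : ContDiffOn ℝ 1 A (closedBall x₀ r))
    (hφ : ContDiffOn ℝ 2 φ (closedBall x₀ r))
    (C₁ C₃ : ℝ)
    (hC₁ : ∀ y ∈ closedBall x₀ r, ‖fderivWithin ℝ A (closedBall x₀ r) y‖ ≤ C₁)
    (hC₃ : ∀ y ∈ closedBall x₀ r,
      ‖fderivWithin ℝ (fun z => fderivWithin ℝ φ (closedBall x₀ r) z)
          (closedBall x₀ r) y‖ ≤ C₃) :
    ∀ ω : ℝ, 0 < ω → ∀ s : EuclideanSpace ℝ (Fin d), ‖s‖ = 1 →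
      ‖(A (x₀ + r • s) : ℂ)
            * Complex.exp (Complex.I * (ω : ℂ) * (φ (x₀ + r • s) : ℂ))
          - (A x₀ : ℂ)
            * Complex.exp (Complex.I * (ω : ℂ)
                * ((φ x₀ + r * ⟪gradient φ x₀, s⟫_ℝ : ℝ) : ℂ))‖
        ≤ r * C₁ + ω * r ^ 2 / 2 * |A x₀| * C₃ := by
  intro ω hω s hs
  set B := closedBall x₀ r with hB
  set x := x₀ + r • s with hxdef
  have hx₀ : x₀ ∈ B := mem_closedBall_self hr.le
  have hxsub : x - x₀ = r • s := by simp [hxdef]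
  have hx : x ∈ B := by
    rw [hB, mem_closedBall, dist_eq_norm, hxsub, norm_smul, hs]
    simp [abs_of_pos hr]
  have hnhds : B ∈ nhds x₀ := closedBall_mem_nhds _ hr
  have hconv : Convex ℝ B := convex_closedBall x₀ r
  have hu : UniqueDiffOn ℝ B := uniqueDiffOn_convex hconv (by
    rw [interior_closedBall _ hr.ne']; exact ⟨x₀, mem_ball_self hr⟩)
  have hφd : DifferentiableOn ℝ φ B := hφ.differentiableOn (by norm_num)
  have hf'd : DifferentiableOn ℝ (fun z => fderivWithin ℝ φ B z) B :=
    (hφ.fderivWithin (m := 1) hu (by norm_num)).differentiableOn one_ne_zero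
  -- amplitude bound
  have hAmv : ‖A x - A x₀‖ ≤ C₁ * ‖x - x₀‖ :=
    hconv.norm_image_sub_le_of_norm_fderivWithin_le (hA.differentiableOn one_ne_zero) hC₁ hx₀ hx
  have hnorm : ‖x - x₀‖ = r := by rw [hxsub, norm_smul, hs]; simp [abs_of_pos hr]
  have hAmv' : |A x - A x₀| ≤ C₁ * r := by
    rw [hnorm] at hAmv; simpa [Real.norm_eq_abs] using hAmv
  -- Taylor bound
  have hT : |φ x - φ x₀ - fderivWithin ℝ φ B x₀ (x - x₀)| ≤ C₃ / 2 * ‖x - x₀‖ ^ 2 :=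
    taylor2_aux hconv hφd hf'd hC₃ hx₀ hx
  -- gradient identification
  have hdiff : DifferentiableAt ℝ φ x₀ := (hφd x₀ hx₀).differentiableAt hnhds
  have hgrad : ⟪gradient φ x₀, s⟫_ℝ = fderiv ℝ φ x₀ s := by
    rw [gradient]; exact InnerProductSpace.toDual_symm_apply
  have hfw : fderivWithin ℝ φ B x₀ = fderiv ℝ φ x₀ := fderivWithin_of_mem_nhds hnhds
  have happ : fderivWithin ℝ φ B x₀ (x - x₀) = r * ⟪gradient φ x₀, s⟫_ℝ := by
    rw [hxsub, map_smul, hgrad, hfw]; simp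
  set ψ : ℝ := φ x₀ + r * ⟪gradient φ x₀, s⟫_ℝ with hψ
  have hT' : |φ x - ψ| ≤ C₃ / 2 * r ^ 2 := by
    have : φ x - ψ = φ x - φ x₀ - fderivWithin ℝ φ B x₀ (x - x₀) := by
      rw [happ, hψ]; ring
    rw [this]; rwa [hnorm] at hT
  -- exponential bound
  have hexp : ‖Complex.exp (Complex.I * (ω : ℂ) * (φ x : ℂ))
      - Complex.exp (Complex.I * (ω : ℂ) * (ψ : ℂ))‖ ≤ ω * |φ x - ψ| := by
    have h1 : Complex.I * (ω : ℂ) * (φ x : ℂ) = ((ω * φ x : ℝ) : ℂ) * Complex.I := by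
      push_cast; ring
    have h2 : Complex.I * (ω : ℂ) * (ψ : ℂ) = ((ω * ψ : ℝ) : ℂ) * Complex.I := by
      push_cast; ring
    rw [h1, h2]
    calc ‖_‖ ≤ |ω * φ x - ω * ψ| := exp_I_lip _ _
      _ = ω * |φ x - ψ| := by rw [← mul_sub, abs_mul, abs_of_pos hω]
  -- combine
  have split : (A x : ℂ) * Complex.exp (Complex.I * (ω : ℂ) * (φ x : ℂ))
      - (A x₀ : ℂ) * Complex.exp (Complex.I * (ω : ℂ) * (ψ : ℂ))
      = ((A x : ℂ) - (A x₀ : ℂ)) * Complex.exp (Complex.I * (ω : ℂ) * (φ x : ℂ))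
        + (A x₀ : ℂ) * (Complex.exp (Complex.I * (ω : ℂ) * (φ x : ℂ))
            - Complex.exp (Complex.I * (ω : ℂ) * (ψ : ℂ))) := by ring
  rw [split]
  have habs1 : ‖((A x : ℂ) - (A x₀ : ℂ))
      * Complex.exp (Complex.I * (ω : ℂ) * (φ x : ℂ))‖ ≤ C₁ * r := by
    rw [norm_mul]
    have he : ‖Complex.exp (Complex.I * (ω : ℂ) * (φ x : ℂ))‖ = 1 := by
      rw [Complex.norm_exp]
      have : (Complex.I * (ω : ℂ) * (φ x : ℂ)).re = 0 := by simp
      rw [this, Real.exp_zero]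
    rw [he, mul_one]
    have : ((A x : ℂ) - (A x₀ : ℂ)) = ((A x - A x₀ : ℝ) : ℂ) := by push_cast; ring
    rw [this, Complex.norm_real, Real.norm_eq_abs]
    exact hAmv'
  have habs2 : ‖(A x₀ : ℂ) * (Complex.exp (Complex.I * (ω : ℂ) * (φ x : ℂ))
      - Complex.exp (Complex.I * (ω : ℂ) * (ψ : ℂ)))‖ ≤ |A x₀| * (ω * (C₃ / 2 * r ^ 2)) := by
    rw [norm_mul, Complex.norm_real, Real.norm_eq_abs]
    refine mul_le_mul_of_nonneg_left (hexp.trans ?_) (abs_nonneg _)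
    exact mul_le_mul_of_nonneg_left hT' hω.le
  calc ‖_‖ ≤ _ + _ := norm_add_le _ _
    _ ≤ C₁ * r + |A x₀| * (ω * (C₃ / 2 * r ^ 2)) := add_le_add habs1 habs2
    _ = r * C₁ + ω * r ^ 2 / 2 * |A x₀| * C₃ := by ring
end
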